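/- In a DAG G = (V, E) in which every vertex has out-degree at most 2 and whose diamond index is bounded by d, the number of distinct paths between any two fixed distinct vertices z and z' is at most (|V|·|E|)^{O(d)}. -/

import Mathlib

/-- `IsPath E z z' p`: `p` is a (vertex sequence of a) path in the digraph with
edge set `E` from `z` to `z'`. -/
def IsPath {V : Type*} (E : Finset (V × V)) (z z' : V) (p : List V) : Prop :=
  p.head? = some z ∧ p.getLast? = some z' ∧ p.Chain' (fun u v => (u, v) ∈ E)

/-- `z'` is reachable from `z` (possibly `z' = z`). -/
def Reach {V : Type*} (E : Finset (V × V)) (z z' : V) : Prop :=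
  ∃ p, IsPath E z z' p

/-- The digraph is acyclic: there is no nontrivial path from a vertex to itself. -/
def Acyclic {V : Type*} (E : Finset (V × V)) : Prop :=
  ¬ ∃ (v : V) (p : List V), p ≠ [] ∧
    List.Chain (fun u w => (u, w) ∈ E) v p ∧ p.getLast? = some v

/-- A diamond from `v` to `v'`: a pair of distinct simple paths from `v` to `v'`
that are vertex-disjoint except at the endpoints. -/
def IsDiamond {V : Type*} (E : Finset (V × V)) (v v' : V) : Prop :=
  ∃ p₁ p₂, IsPath E v v' p₁ ∧ IsPath E v v' p₂ ∧ p₁.Nodup ∧ p₂.Nodup ∧ p₁ ≠ p₂ ∧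
    ∀ x ∈ p₁, x ∈ p₂ → x = v ∨ x = v'

/-- A sequence of diamonds (given by their source/destination pairs) in which each
diamond's source is reachable from the previous diamond's destination. -/
def IsDiamondSeq {V : Type*} (E : Finset (V × V)) (l : List (V × V)) : Prop :=
  (∀ pr ∈ l, IsDiamond E pr.1 pr.2) ∧ l.Chain' (fun pr qr => Reach E pr.2 qr.1)

section Basics
variable {V : Type*} {E : Finset (V × V)}

lemma reach_refl (v : V) : Reach E v v :=
  ⟨[v], by simp [IsPath, List.Chain', List.isChain_singleton]⟩

lemma reach_of_edge {a b : V} (h : (a, b) ∈ E) : Reach E a b :=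
  ⟨[a, b], by simp [IsPath, h, List.Chain', List.isChain_pair]⟩

lemma reach_trans {a b c : V} (hab : Reach E a b) (hbc : Reach E b c) : Reach E a c := by
  obtain ⟨p, hp1, hp2, hp3⟩ := hab
  obtain ⟨q, hq1, hq2, hq3⟩ := hbc
  match q, hq1 with
  | b :: q', hq1 =>
    simp only [List.head?_cons, Option.some.injEq] at hq1
    subst hq1
    match q', hq2, hq3 with
    | [], hq2, _ =>
      simp at hq2; subst hq2; exact ⟨p, hp1, hp2, hp3⟩
    | y :: q'', hq2, hq3 =>
      refine ⟨p ++ y :: q'', ?_, ?_, ?_⟩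
      · match p, hp1 with
        | a' :: p', hp1 => simpa using hp1
      · rw [List.getLast?_append_of_ne_nil _ (by simp)]
        simpa using hq2
      · refine List.isChain_append.2 ⟨hp3, (List.isChain_cons.1 hq3).2, ?_⟩
        intro x hx y' hy'
        simp only [List.head?_cons, Option.mem_def, Option.some.injEq] at hy'
        subst hy'
        rw [hp2] at hx
        obtain rfl : b = x := by simpa using hx
        exact (List.isChain_cons.1 hq3).1 y rfl

lemma isPath_prefix {a x u : V} {s t : List V}
    (h : IsPath E a x (s ++ u :: t)) : IsPath E a u (s ++ [u]) := by
  obtain ⟨h1, _h2, h3⟩ := h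
  refine ⟨?_, by simp, ?_⟩
  · cases s with
    | nil => simpa using h1
    | cons b s' => simpa using h1
  · exact h3.prefix ⟨t, by simp⟩

lemma isPath_suffix {a x u : V} {s t : List V}
    (h : IsPath E a x (s ++ u :: t)) : IsPath E u x (u :: t) := by
  obtain ⟨_h1, h2, h3⟩ := h
  refine ⟨by simp, ?_, ?_⟩
  · rw [List.getLast?_append_of_ne_nil _ (by simp)] at h2; exact h2
  · exact h3.suffix ⟨s, rfl⟩

lemma nodup_of_chain' (hac : Acyclic E) {p : List V}
    (hc : p.Chain' (fun u v => (u, v) ∈ E)) : p.Nodup := by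
  induction p with
  | nil => simp
  | cons a t ih =>
    have ht : t.Nodup := ih hc.tail
    refine List.nodup_cons.2 ⟨?_, ht⟩
    intro hmem
    obtain ⟨s, t', rfl⟩ := List.append_of_mem hmem
    exact hac ⟨a, s ++ [a], by simp, by
      have : (a :: (s ++ [a])).Chain' (fun u v => (u, v) ∈ E) :=
        hc.prefix ⟨t', by simp⟩
      exact this, by simp⟩

lemma isPath_nodup (hac : Acyclic E) {a x : V} {p : List V} (h : IsPath E a x p) : p.Nodup :=
  nodup_of_chain' hac h.2.2
section Rank
variable {V : Type*}

/-- The set of lengths of diamond sequences whose first diamond's source is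
reachable from `v`. -/
def rankSet (E : Finset (V × V)) (v : V) : Set ℕ :=
  {n | ∃ l : List (V × V), IsDiamondSeq E l ∧ l.length = n ∧
    ∀ pr ∈ l.head?, Reach E v pr.1}

noncomputable def dRank (E : Finset (V × V)) (v : V) : ℕ := sSup (rankSet E v)

variable {E : Finset (V × V)} {d : ℕ}

lemma zero_mem_rankSet (v : V) : 0 ∈ rankSet E v :=
  ⟨[], ⟨by simp, by simp [List.Chain', List.isChain_nil]⟩, by simp, by simp⟩

lemma rankSet_bdd (hb : ∀ l : List (V × V), IsDiamondSeq E l → l.length ≤ d) (v : V) :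
    ∀ n ∈ rankSet E v, n ≤ d := by
  rintro n ⟨l, hl, rfl, -⟩; exact hb l hl

lemma dRank_le (hb : ∀ l : List (V × V), IsDiamondSeq E l → l.length ≤ d) (v : V) :
    dRank E v ≤ d :=
  csSup_le ⟨0, zero_mem_rankSet v⟩ (rankSet_bdd hb v)

lemma dRank_mem (hb : ∀ l : List (V × V), IsDiamondSeq E l → l.length ≤ d) (v : V) :
    dRank E v ∈ rankSet E v :=
  Nat.sSup_mem ⟨0, zero_mem_rankSet v⟩ ⟨d, rankSet_bdd hb v⟩

lemma dRank_mono (hb : ∀ l : List (V × V), IsDiamondSeq E l → l.length ≤ d)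
    {v w : V} (h : Reach E v w) : dRank E w ≤ dRank E v := by
  apply csSup_le_csSup ⟨d, rankSet_bdd hb v⟩ ⟨0, zero_mem_rankSet w⟩
  rintro n ⟨l, hl, rfl, hh⟩
  exact ⟨l, hl, rfl, fun pr hpr => reach_trans h (hh pr hpr)⟩

lemma dRank_lt_of_diamond (hb : ∀ l : List (V × V), IsDiamondSeq E l → l.length ≤ d)
    {v u : V} (h : IsDiamond E v u) : dRank E u < dRank E v := by
  obtain ⟨l, hl, hlen, hh⟩ := dRank_mem hb u
  have hmem : dRank E u + 1 ∈ rankSet E v := by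
    refine ⟨(v, u) :: l, ⟨?_, ?_⟩, by simp [hlen], ?_⟩
    · rintro pr hpr
      rcases List.mem_cons.1 hpr with rfl | hpr
      · exact h
      · exact hl.1 pr hpr
    · exact hl.2.cons (fun y hy => hh y hy)
    · intro pr hpr
      simp only [List.head?_cons, Option.mem_def, Option.some.injEq] at hpr
      subst hpr
      exact reach_refl v
  have h2 : dRank E u + 1 ≤ dRank E v := le_csSup ⟨d, rankSet_bdd hb v⟩ hmem
  omega

end Rank
section Diamond
variable {V : Type*} {E : Finset (V × V)}

lemma exists_first_mem {l : List V} {P : V → Prop} (h : ∃ y ∈ l, P y) :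
    ∃ s u t, l = s ++ u :: t ∧ P u ∧ ∀ y ∈ s, ¬ P y := by
  induction l with
  | nil => simp at h
  | cons a l ih =>
    by_cases ha : P a
    · exact ⟨[], a, l, by simp, ha, by simp⟩
    · obtain ⟨y, hy, hPy⟩ := h
      rcases List.mem_cons.1 hy with rfl | hy
      · exact absurd hPy ha
      · obtain ⟨s, u, t, rfl, hu, hs⟩ := ih ⟨y, hy, hPy⟩
        exact ⟨a :: s, u, t, by simp, hu, by
          intro y' hy'
          rcases List.mem_cons.1 hy' with rfl | hy'
          · exact ha
          · exact hs y' hy'⟩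

lemma diamond_of_two_paths (hac : Acyclic E) :
    ∀ {p : List V} {a x : V} {q : List V}, IsPath E a x p → IsPath E a x q → p ≠ q →
    ∃ v u, IsDiamond E v u ∧ Reach E a v ∧ Reach E u x := by
  intro p
  induction p with
  | nil => intro a x q hp; simp [IsPath] at hp
  | cons a₀ p' ih =>
    intro a x q hp hq hne
    obtain rfl : a = a₀ := by simpa [eq_comm] using hp.1
    match q, hq.1 with
    | a₁ :: q', hq1 =>
      obtain rfl : a = a₁ := by simpa [eq_comm] using hq1
      match p', q' with
      | [], [] => exact absurd rfl hne
      | [], c :: q'' =>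
        -- p = [a], so x = a; q is a nontrivial path a → a: contradicts nodup
        obtain rfl : a = x := by simpa using hp.2.1
        have hnd := isPath_nodup hac hq
        have hmem : a ∈ c :: q'' := by
          have := hq.2.1
          rw [List.getLast?_cons_cons] at this
          exact List.mem_of_mem_getLast? this
        rw [List.nodup_cons] at hnd
        exact absurd hmem hnd.1
      | b :: p'', [] =>
        obtain rfl : a = x := by simpa using hq.2.1
        have hnd := isPath_nodup hac hp
        have hmem : a ∈ b :: p'' := by
          have := hp.2.1
          rw [List.getLast?_cons_cons] at this
          exact List.mem_of_mem_getLast? this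
        rw [List.nodup_cons] at hnd
        exact absurd hmem hnd.1
      | b :: p'', c :: q'' =>
        by_cases hbc : b = c
        · subst hbc
          have hp' : IsPath E b x (b :: p'') :=
            ⟨rfl, by rw [← List.getLast?_cons_cons (a := a)]; exact hp.2.1, hp.2.2.tail⟩
          have hq' : IsPath E b x (b :: q'') :=
            ⟨rfl, by rw [← List.getLast?_cons_cons (a := a)]; exact hq.2.1, hq.2.2.tail⟩
          have hne' : b :: p'' ≠ b :: q'' := by
            intro h; exact hne (by rw [h])
          obtain ⟨v, u, hd, hrv, hux⟩ := ih hp' hq' hne'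
          exact ⟨v, u, hd, reach_trans (reach_of_edge hp.2.2.rel_head) hrv, hux⟩
        · -- first divergence at a; find first vertex of b::p'' in c::q''
          have hxp : x ∈ b :: p'' := by
            have := hp.2.1; rw [List.getLast?_cons_cons] at this
            exact List.mem_of_mem_getLast? this
          have hxq : x ∈ c :: q'' := by
            have := hq.2.1; rw [List.getLast?_cons_cons] at this
            exact List.mem_of_mem_getLast? this
          obtain ⟨s₁, u, t₁, hsplit₁, huq, hs₁⟩ :=
            exists_first_mem (P := fun y => y ∈ c :: q'') ⟨x, hxp, hxq⟩
          obtain ⟨s₂, u₂, t₂, hsplit₂, hu₂, hs₂⟩ :=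
            exists_first_mem (P := fun y => y = u) ⟨u, huq, rfl⟩
          subst hu₂
          have hpform : (a :: b :: p'') = (a :: s₁) ++ u₂ :: t₁ := by simp [hsplit₁]
          have hqform : (a :: c :: q'') = (a :: s₂) ++ u₂ :: t₂ := by simp [hsplit₂]
          have hP₁ : IsPath E a u₂ ((a :: s₁) ++ [u₂]) := isPath_prefix (hpform ▸ hp)
          have hP₂ : IsPath E a u₂ ((a :: s₂) ++ [u₂]) := isPath_prefix (hqform ▸ hq)
          have hnd₁ : ((a :: s₁) ++ [u₂]).Nodup :=
            (isPath_nodup hac (hpform ▸ hp)).sublist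
              (List.IsPrefix.sublist ⟨t₁, by simp⟩)
          have hnd₂ : ((a :: s₂) ++ [u₂]).Nodup :=
            (isPath_nodup hac (hqform ▸ hq)).sublist
              (List.IsPrefix.sublist ⟨t₂, by simp⟩)
          have hne' : (a :: s₁) ++ [u₂] ≠ (a :: s₂) ++ [u₂] := by
            have hb : (s₁ ++ [u₂]).head? = some b := by
              cases s₁ with
              | nil => simp at hsplit₁; simp [hsplit₁.1]
              | cons b₁ s₁' => simp at hsplit₁ ⊢; exact hsplit₁.1.symm
            have hc : (s₂ ++ [u₂]).head? = some c := by
              cases s₂ with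
              | nil => simp at hsplit₂; simp [hsplit₂.1]
              | cons c₁ s₂' => simp at hsplit₂ ⊢; exact hsplit₂.1.symm
            intro h
            simp only [List.cons_append, List.cons.injEq, true_and] at h
            rw [h, hc] at hb
            exact hbc (by simpa [eq_comm] using hb)
          have hdisj : ∀ y ∈ (a :: s₁) ++ [u₂], y ∈ (a :: s₂) ++ [u₂] → y = a ∨ y = u₂ := by
            intro y hy₁ hy₂
            simp only [List.cons_append, List.mem_cons, List.mem_append,
              List.mem_singleton, List.not_mem_nil, or_false] at hy₁ hy₂
            rcases hy₁ with rfl | hy₁ | rfl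
            · exact Or.inl rfl
            · rcases hy₂ with rfl | hy₂ | rfl
              · exact Or.inl rfl
              · exfalso
                refine hs₁ y hy₁ ?_
                rw [hsplit₂]
                exact List.mem_append_left _ hy₂
              · exact Or.inr rfl
            · exact Or.inr rfl
          refine ⟨a, u₂, ⟨(a :: s₁) ++ [u₂], (a :: s₂) ++ [u₂], hP₁, hP₂, hnd₁, hnd₂, hne', hdisj⟩,
            reach_refl a, ?_⟩
          exact ⟨u₂ :: t₁, isPath_suffix (hpform ▸ hp)⟩

end Diamond
section Drops
variable {V : Type*} {E : Finset (V × V)} {d : ℕ}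

lemma unique_path (hac : Acyclic E)
    (hb : ∀ l : List (V × V), IsDiamondSeq E l → l.length ≤ d)
    {a x : V} {p q : List V} (hp : IsPath E a x p) (hq : IsPath E a x q)
    (hr : dRank E a ≤ dRank E x) : p = q := by
  by_contra hne
  obtain ⟨v, u, hdia, hav, hux⟩ := diamond_of_two_paths hac hp hq hne
  have h1 : dRank E v ≤ dRank E a := dRank_mono hb hav
  have h2 : dRank E x ≤ dRank E u := dRank_mono hb hux
  have h3 : dRank E u < dRank E v := dRank_lt_of_diamond hb hdia
  omega

open Classical in
/-- The list of edges of `p` along which `dRank` strictly decreases. -/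
noncomputable def drops (E : Finset (V × V)) : List V → List (V × V)
  | [] => []
  | [_] => []
  | a :: b :: t =>
    if dRank E b < dRank E a then (a, b) :: drops E (b :: t) else drops E (b :: t)

@[simp] lemma drops_nil : drops E ([] : List V) = [] := by simp [drops]

@[simp] lemma drops_singleton (a : V) : drops E [a] = [] := by simp [drops]

lemma drops_mem_E {p : List V} (hc : p.Chain' (fun u v => (u, v) ∈ E)) :
    ∀ e ∈ drops E p, e ∈ E := by
  induction p with
  | nil => simp
  | cons a t ih =>
    cases t with
    | nil => simp
    | cons b t' =>
      intro e he
      rw [drops] at he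
      split at he
      · rcases List.mem_cons.1 he with rfl | he
        · exact hc.rel_head
        · exact ih hc.tail e he
      · exact ih hc.tail e he

lemma drops_src_le {p : List V} {a : V} (ha : p.head? = some a)
    (hb : ∀ l : List (V × V), IsDiamondSeq E l → l.length ≤ d)
    (hc : p.Chain' (fun u v => (u, v) ∈ E)) :
    ∀ e ∈ drops E p, dRank E e.1 ≤ dRank E a := by
  induction p generalizing a with
  | nil => simp
  | cons a₀ t ih =>
    obtain rfl : a = a₀ := by simpa [eq_comm] using ha
    cases t with
    | nil => simp
    | cons b t' =>
      intro e he
      have hba : dRank E b ≤ dRank E a := dRank_mono hb (reach_of_edge hc.rel_head)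
      rw [drops] at he
      split at he
      · rcases List.mem_cons.1 he with rfl | he
        · rfl
        · exact le_trans (ih rfl hc.tail e he) hba
      · exact le_trans (ih rfl hc.tail e he) hba

lemma drops_chain (hb : ∀ l : List (V × V), IsDiamondSeq E l → l.length ≤ d)
    {p : List V} (hc : p.Chain' (fun u v => (u, v) ∈ E)) :
    (drops E p).Chain' (fun e f => dRank E f.1 < dRank E e.1) := by
  induction p with
  | nil => simp [List.Chain', List.isChain_nil]
  | cons a t ih =>
    cases t with
    | nil => simp [List.Chain', List.isChain_nil]
    | cons b t' =>
      rw [drops]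
      split
      · rename_i hdrop
        refine (ih hc.tail).cons ?_
        intro f hf
        have := drops_src_le (p := b :: t') rfl hb hc.tail f (List.mem_of_mem_head? hf)
        exact lt_of_le_of_lt this hdrop
      · exact ih hc.tail

lemma drops_strict {p : List V} :
    ∀ e ∈ drops E p, dRank E e.2 < dRank E e.1 := by
  induction p with
  | nil => simp
  | cons a t ih =>
    cases t with
    | nil => simp
    | cons b t' =>
      intro e he
      rw [drops] at he
      split at he
      · rcases List.mem_cons.1 he with rfl | he
        · assumption
        · exact ih e he
      · exact ih e he

lemma length_le_of_chain_gt : ∀ (l : List ℕ) (H : ℕ), l.Chain' (· > ·) →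
    (∀ x ∈ l, 0 < x ∧ x ≤ H) → l.length ≤ H := by
  intro l
  induction l with
  | nil => simp
  | cons a t ih =>
    intro H hchain hmem
    have hpair : ∀ x ∈ t, x < a := by
      have := List.isChain_iff_pairwise.1 hchain
      exact fun x hx => List.rel_of_pairwise_cons this hx
    have ht : t.length ≤ a - 1 := by
      refine ih (a - 1) hchain.tail ?_
      intro x hx
      have h1 := (hmem x (List.mem_cons_of_mem _ hx)).1
      have h2 := hpair x hx
      omega
    have ha := hmem a List.mem_cons_self
    simp only [List.length_cons]
    omega

lemma drops_length_le (hb : ∀ l : List (V × V), IsDiamondSeq E l → l.length ≤ d)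
    {p : List V} (hc : p.Chain' (fun u v => (u, v) ∈ E)) :
    (drops E p).length ≤ d := by
  have h1 : ((drops E p).map (fun e => dRank E e.1)).Chain' (· > ·) := by
    rw [List.Chain', List.isChain_map]
    exact drops_chain hb hc
  have h2 : ∀ x ∈ (drops E p).map (fun e => dRank E e.1), 0 < x ∧ x ≤ d := by
    intro x hx
    obtain ⟨e, he, rfl⟩ := List.mem_map.1 hx
    exact ⟨lt_of_le_of_lt (Nat.zero_le _) (drops_strict e he), dRank_le hb _⟩
  have := length_le_of_chain_gt _ d h1 h2
  simpa using this

lemma drops_nil_rank {p : List V} {a x : V} (ha : p.head? = some a)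
    (hx : p.getLast? = some x) (h : drops E p = []) : dRank E a ≤ dRank E x := by
  induction p generalizing a with
  | nil => simp at ha
  | cons a₀ t ih =>
    obtain rfl : a = a₀ := by simpa [eq_comm] using ha
    cases t with
    | nil =>
      obtain rfl : a = x := by simpa using hx
      rfl
    | cons b t' =>
      rw [drops] at h
      split at h
      · simp at h
      · rename_i hnd
        have h1 : dRank E a ≤ dRank E b := by omega
        have h2 : dRank E b ≤ dRank E x := by
          rw [List.getLast?_cons_cons] at hx
          exact ih rfl hx h
        exact le_trans h1 h2

lemma drops_split {p : List V} {e : V × V} {rest : List (V × V)}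
    (h : drops E p = e :: rest) :
    ∃ s t, p = s ++ e.1 :: e.2 :: t ∧ drops E (s ++ [e.1]) = [] ∧
      drops E (e.2 :: t) = rest := by
  induction p with
  | nil => simp at h
  | cons a t ih =>
    cases t with
    | nil => simp at h
    | cons b t' =>
      rw [drops] at h
      split at h
      · rename_i hdrop
        obtain ⟨rfl, rfl⟩ : e = (a, b) ∧ drops E (b :: t') = rest := by
          have := List.cons.inj h; exact ⟨this.1.symm, this.2⟩
        exact ⟨[], t', by simp, by simp, rfl⟩
      · rename_i hnd
        obtain ⟨s, t₀, hform, hnil, hrest⟩ := ih h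
        refine ⟨a :: s, t₀, by simp [hform], ?_, hrest⟩
        cases s with
        | nil =>
          obtain rfl : b = e.1 := by simpa using congrArg List.head? hform
          simp only [List.nil_append, List.cons_append] at *
          rw [drops]
          simp [hnd]
        | cons b₀ s' =>
          obtain rfl : b = b₀ := by simpa using congrArg List.head? hform
          simp only [List.cons_append] at hnil ⊢
          rw [drops]
          rw [if_neg hnd]
          exact hnil

end Drops
section Inj
variable {V : Type*} {E : Finset (V × V)} {d : ℕ}

lemma drops_inj (hac : Acyclic E)
    (hb : ∀ l : List (V × V), IsDiamondSeq E l → l.length ≤ d) :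
    ∀ (l : List (V × V)) {a z' : V} {p q : List V},
      IsPath E a z' p → IsPath E a z' q → drops E p = l → drops E q = l → p = q := by
  intro l
  induction l with
  | nil =>
    intro a z' p q hp hq hdp hdq
    exact unique_path hac hb hp hq (drops_nil_rank hp.1 hp.2.1 hdp)
  | cons e rest ih =>
    intro a z' p q hp hq hdp hdq
    obtain ⟨s₁, t₁, rfl, hnil₁, hrest₁⟩ := drops_split hdp
    obtain ⟨s₂, t₂, rfl, hnil₂, hrest₂⟩ := drops_split hdq
    have hp₁ : IsPath E a e.1 (s₁ ++ [e.1]) := isPath_prefix hp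
    have hq₁ : IsPath E a e.1 (s₂ ++ [e.1]) := isPath_prefix hq
    have hr : dRank E a ≤ dRank E e.1 := drops_nil_rank hp₁.1 hp₁.2.1 hnil₁
    have hpre : s₁ ++ [e.1] = s₂ ++ [e.1] := unique_path hac hb hp₁ hq₁ hr
    have hs : s₁ = s₂ := by
      have := congrArg (fun l => List.dropLast l) hpre
      simpa using this
    have hp₂ : IsPath E e.2 z' (e.2 :: t₁) := by
      have h : s₁ ++ e.1 :: e.2 :: t₁ = (s₁ ++ [e.1]) ++ e.2 :: t₁ := by simp
      exact isPath_suffix (h ▸ hp)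
    have hq₂ : IsPath E e.2 z' (e.2 :: t₂) := by
      have h : s₂ ++ e.1 :: e.2 :: t₂ = (s₂ ++ [e.1]) ++ e.2 :: t₂ := by simp
      exact isPath_suffix (h ▸ hq)
    have ht : e.2 :: t₁ = e.2 :: t₂ := ih hp₂ hq₂ hrest₁ hrest₂
    rw [hs, List.cons.inj ht |>.2]

end Inj


/-- In a DAG in which every vertex has out-degree at most 2 and whose diamond
index is bounded by `d`, the number of distinct paths between any two fixed
distinct vertices `z`, `z'` is at most `(|V|·|E|)^{O(d)}`. -/
theorem paths_le_of_diamondIndex :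
    ∃ c : ℕ, ∀ (V : Type) [Fintype V] [DecidableEq V] (E : Finset (V × V)) (d : ℕ),
      Acyclic E →
      (∀ v : V, (E.filter fun e => e.1 = v).card ≤ 2) →
      (∀ l : List (V × V), IsDiamondSeq E l → l.length ≤ d) →
      ∀ z z' : V, z ≠ z' →
        {p : List V | IsPath E z z' p}.ncard ≤
          (Fintype.card V * E.card) ^ (c * d + c) := by
  refine ⟨1, ?_⟩
  intro V _ _ E d hac _hdeg hb z z' hzz'
  set S : Set (List V) := {p : List V | IsPath E z z' p} with hS
  by_cases hE : E = ∅
  · -- no edges: no paths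
    have : S = ∅ := by
      ext p
      simp only [hS, Set.mem_setOf_eq, Set.mem_empty_iff_false, iff_false]
      rintro ⟨h1, h2, h3⟩
      match p, h1 with
      | a :: p', h1 =>
        obtain rfl : z = a := by simpa [eq_comm] using h1
        match p', h2, h3 with
        | [], h2, _ => exact hzz' (by simpa using h2)
        | y :: p'', _, h3 =>
          have : (z, y) ∈ E := h3.rel_head
          simp [hE] at this
    simp [this]
  · -- main case
    classical
    set m := E.card with hm
    have hm1 : 1 ≤ m := Finset.card_pos.2 (Finset.nonempty_iff_ne_empty.2 hE)
    have hn2 : 2 ≤ Fintype.card V := Fintype.one_lt_card_iff_nontrivial.2 ⟨z, z', hzz'⟩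
    -- injection into functions Fin d → Option {e // e ∈ E}
    set Φ : List V → (Fin d → Option {e : V × V // e ∈ E}) :=
      fun p i => ((drops E p)[(i : ℕ)]?).bind
        (fun e => if h : e ∈ E then some ⟨e, h⟩ else none) with hΦ
    have hinj : Set.InjOn Φ S := by
      intro p hp q hq hpq
      have hdl : drops E p = drops E q := by
        apply List.ext_getElem?
        intro n
        by_cases hn : n < d
        · have h := congrFun hpq ⟨n, hn⟩
          simp only [hΦ] at h
          have hpE := drops_mem_E (E := E) hp.2.2
          have hqE := drops_mem_E (E := E) hq.2.2
          cases hgp : (drops E p)[n]? with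
          | none =>
            cases hgq : (drops E q)[n]? with
            | none => rfl
            | some f =>
              rw [hgp, hgq] at h
              have hf : f ∈ E := hqE f (List.mem_of_getElem? hgq)
              simp [hf] at h
          | some e =>
            have he : e ∈ E := hpE e (List.mem_of_getElem? hgp)
            cases hgq : (drops E q)[n]? with
            | none =>
              rw [hgp, hgq] at h
              simp [he] at h
            | some f =>
              have hf : f ∈ E := hqE f (List.mem_of_getElem? hgq)
              rw [hgp, hgq] at h
              simp [he, hf] at h
              rw [h]
        · have h1 : (drops E p).length ≤ d := drops_length_le hb hp.2.2
          have h2 : (drops E q).length ≤ d := drops_length_le hb hq.2.2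
          rw [List.getElem?_eq_none (by omega), List.getElem?_eq_none (by omega)]
      exact drops_inj hac hb (drops E p) hp hq rfl hdl.symm
    have hcard : S.ncard ≤ (m + 1) ^ d := by
      have h1 : S.ncard ≤ (Set.univ : Set (Fin d → Option {e : V × V // e ∈ E})).ncard :=
        Set.ncard_le_ncard_of_injOn Φ (fun a _ => Set.mem_univ _) hinj (Set.finite_univ)
      have h2 : (Set.univ : Set (Fin d → Option {e : V × V // e ∈ E})).ncard
          = (m + 1) ^ d := by
        rw [Set.ncard_univ, Nat.card_eq_fintype_card, Fintype.card_fun]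
        simp [hm]
      omega
    refine le_trans hcard ?_
    have hbase : m + 1 ≤ Fintype.card V * m := by nlinarith
    calc (m + 1) ^ d ≤ (Fintype.card V * m) ^ d := Nat.pow_le_pow_left hbase d
      _ ≤ (Fintype.card V * m) ^ (1 * d + 1) := Nat.pow_le_pow_right (by nlinarith) (by omega)
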